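/- arXiv:1810.05713 — 2 statements merged into one kernel-verified Lean document; each statement's English description precedes it below -/
import Mathlib

section
/- Let q be a probability measure on ℝ^d, let u ≥ 1, let g : ℝ^d → ℝ^u be measurable, let x ∈ ℝ^u, and let σ : Fin u → ℝ with σ_i > 0 for all i. Define p(x|w) = ∏_{i=1}^{u} (2π σ_i²)^{−1/2} exp(−(x_i − g_i(w))²/(2σ_i²)), the density of a Gaussian with independent coordinates, mean g(w), and variances σ_i². Assume w ↦ p(x|w) is q-integrable with ∫ p(x|w) dq(w) > 0 and that w ↦ Σ_i (x_i − g_i(w))² is q-integrable. Then −log(∫ p(x|w) dq(w)) ≤ ∫ [ Σ_{i=1}^{u} ( (x_i − g_i(w))²/(2σ_i²) + (1/2) log σ_i² ) ] dq(w) + (u/2)·log(2π). -/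
open MeasureTheory Real

/-- Variational (Jensen) upper bound on the negative log-likelihood of a Gaussian
decoder with independent coordinates: the negative marginal log-likelihood is bounded
by the expected scaled squared error plus log-variance terms plus a constant. -/
theorem neg_log_marginal_likelihood_le_gaussian_bound
    {d u : ℕ} (hu : 1 ≤ u)
    (q : Measure (Fin d → ℝ)) [IsProbabilityMeasure q]
    (g : (Fin d → ℝ) → (Fin u → ℝ)) (hg : Measurable g)
    (x : Fin u → ℝ) (σ : Fin u → ℝ) (hσ : ∀ i, 0 < σ i)
    (p : (Fin d → ℝ) → ℝ)
    (hp : ∀ w, p w =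
      ∏ i : Fin u, (2 * π * σ i ^ 2) ^ (-(1:ℝ)/2) *
        Real.exp (-(x i - g w i) ^ 2 / (2 * σ i ^ 2)))
    (hp_int : Integrable p q) (hp_pos : 0 < ∫ w, p w ∂q)
    (hsq_int : Integrable (fun w => ∑ i : Fin u, (x i - g w i) ^ 2) q) :
    -Real.log (∫ w, p w ∂q) ≤
      (∫ w, ∑ i : Fin u,
          ((x i - g w i) ^ 2 / (2 * σ i ^ 2) + (1/2) * Real.log (σ i ^ 2)) ∂q)
        + (u / 2 : ℝ) * Real.log (2 * π) := by
  set m := ∫ w, p w ∂q with hm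
  have hπ : (0:ℝ) < 2 * π := mul_pos two_pos Real.pi_pos
  have hσ2 : ∀ i, (0:ℝ) < σ i ^ 2 := fun i => pow_pos (hσ i) 2
  set F : (Fin d → ℝ) → ℝ := fun w => ∑ i : Fin u,
      ((x i - g w i) ^ 2 / (2 * σ i ^ 2) + (1/2) * Real.log (σ i ^ 2)) with hF
  -- p w positive and log p w = -(F w) - (u/2) log(2π)
  have hppos : ∀ w, 0 < p w := by
    intro w; rw [hp w]
    apply Finset.prod_pos
    intro i _
    have h1 : (0:ℝ) < 2 * π * σ i ^ 2 := mul_pos hπ (hσ2 i)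
    exact mul_pos (Real.rpow_pos_of_pos h1 _) (Real.exp_pos _)
  have hlog : ∀ w, Real.log (p w) = -(F w) - (u / 2 : ℝ) * Real.log (2 * π) := by
    intro w
    rw [hp w, Real.log_prod (fun i _ => by
      have h1 : (0:ℝ) < 2 * π * σ i ^ 2 := mul_pos hπ (hσ2 i)
      exact ne_of_gt (mul_pos (Real.rpow_pos_of_pos h1 _) (Real.exp_pos _)))]
    have : ∀ i : Fin u,
        Real.log ((2 * π * σ i ^ 2) ^ (-(1:ℝ)/2) *
          Real.exp (-(x i - g w i) ^ 2 / (2 * σ i ^ 2)))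
        = -(((x i - g w i) ^ 2 / (2 * σ i ^ 2) + (1/2) * Real.log (σ i ^ 2)))
          - (1/2 : ℝ) * Real.log (2 * π) := by
      intro i
      have h1 : (0:ℝ) < 2 * π * σ i ^ 2 := mul_pos hπ (hσ2 i)
      rw [Real.log_mul (ne_of_gt (Real.rpow_pos_of_pos h1 _)) (Real.exp_ne_zero _), Real.log_rpow h1,
        Real.log_exp, Real.log_mul (ne_of_gt hπ) (ne_of_gt (hσ2 i))]
      ring
    rw [Finset.sum_congr rfl (fun i _ => this i)]
    rw [Finset.sum_sub_distrib, ← Finset.sum_neg_distrib, Finset.sum_const,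
      Finset.card_univ, Fintype.card_fin, nsmul_eq_mul]
    ring
  -- integrability of F
  have hsq_i : ∀ i : Fin u, Integrable (fun w => (x i - g w i) ^ 2) q := by
    intro i
    apply hsq_int.mono'
    · exact ((continuous_pow 2).measurable.comp
        ((measurable_const.sub ((measurable_pi_apply i).comp hg)))).aestronglyMeasurable
    · filter_upwards with w
      rw [Real.norm_eq_abs, abs_of_nonneg (by positivity)]
      exact Finset.single_le_sum (f := fun j => (x j - g w j)^2)
        (fun j _ => by positivity) (Finset.mem_univ i)
  have hF_int : Integrable F q := by
    apply integrable_finset_sum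
    intro i _
    exact (((hsq_i i).div_const _)).add (integrable_const _)
  have hlogp_int : Integrable (fun w => Real.log (p w)) q := by
    have : (fun w => Real.log (p w))
        = fun w => -(F w) - (u / 2 : ℝ) * Real.log (2 * π) := funext hlog
    rw [this]
    exact hF_int.neg.sub (integrable_const _)
  -- Jensen via tangent line: log (p w) - log m ≤ p w / m - 1
  have key : ∫ w, Real.log (p w) ∂q ≤ Real.log m := by
    have hpt : ∀ w, Real.log (p w) ≤ Real.log m + (p w / m - 1) := by
      intro w
      have := Real.log_le_sub_one_of_pos (div_pos (hppos w) hp_pos)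
      rw [Real.log_div (ne_of_gt (hppos w)) (ne_of_gt hp_pos)] at this
      linarith
    have hsub : Integrable (fun w => p w / m - 1) q :=
      (hp_int.div_const m).sub (integrable_const _)
    calc ∫ w, Real.log (p w) ∂q
        ≤ ∫ w, (Real.log m + (p w / m - 1)) ∂q := by
          apply integral_mono hlogp_int _ hpt
          exact (integrable_const _).add hsub
      _ = Real.log m := by
          rw [integral_add (integrable_const _) hsub,
            integral_sub (hp_int.div_const m) (integrable_const _),
            integral_const, integral_const, integral_div]
          simp [hm, div_self (ne_of_gt hp_pos)]
          exact sub_eq_zero.mpr (div_self (ne_of_gt hp_pos))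
  -- conclude
  have hIlog : ∫ w, Real.log (p w) ∂q
      = -(∫ w, F w ∂q) - (u / 2 : ℝ) * Real.log (2 * π) := by
    have : (fun w => Real.log (p w))
        = fun w => -(F w) - (u / 2 : ℝ) * Real.log (2 * π) := funext hlog
    rw [this, integral_sub hF_int.neg' (integrable_const _), integral_neg, integral_const]
    simp
  rw [hIlog] at key
  have : ∫ w, ∑ i : Fin u,
      ((x i - g w i) ^ 2 / (2 * σ i ^ 2) + (1/2) * Real.log (σ i ^ 2)) ∂q
      = ∫ w, F w ∂q := rfl
  rw [this]
  linarith
end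

section
/- Let μ be a probability measure on ℝ supported in [0,1], let f : ℝ → ℝ have bounded total variation V on [0,1] (V = eVariationOn f [0,1] < ∞), and let z_1, …, z_m ∈ [0,1] with m ≥ 1. Define the discrepancy D* = sup_{t ∈ [0,1]} | μ((−∞, t]) − (1/m)·#{i : z_i ≤ t} |. If f is μ-integrable, then | ∫ f dμ − (1/m) Σ_{i=1}^{m} f(z_i) | ≤ V · D*. -/
open MeasureTheory Set
open scoped ENNReal NNReal

lemma KH.integrable_dirac (f : ℝ → ℝ) (a : ℝ) : Integrable f (Measure.dirac a) := by
  have h : f =ᵐ[Measure.dirac a] fun _ => f a := by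
    refine measure_mono_null (fun x hx => ?_) (?_ : Measure.dirac a {a}ᶜ = 0)
    · simp only [mem_compl_iff, mem_singleton_iff]
      intro hxa; exact hx (by simp [hxa])
    · rw [Measure.dirac_apply' _ (measurableSet_singleton a).compl]
      simp
  exact (integrable_const (f a)).congr h.symm

/-- Pass the `Iic` discrepancy bound to `Iio` sets by continuity from below. -/
lemma KH.iio_bound (μ ν : Measure ℝ) [IsProbabilityMeasure μ] [IsProbabilityMeasure ν]
    (hμ : μ (Set.Icc (0:ℝ) 1)ᶜ = 0) (hν : ν (Set.Icc (0:ℝ) 1)ᶜ = 0)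
    (D : ℝ)
    (hD : ∀ c ∈ Set.Icc (0:ℝ) 1, |(μ (Set.Iic c)).toReal - (ν (Set.Iic c)).toReal| ≤ D)
    {c : ℝ} (hc : c ∈ Set.Icc (0:ℝ) 1) :
    |(μ (Set.Iio c)).toReal - (ν (Set.Iio c)).toReal| ≤ D := by
  obtain ⟨hc0, hc1⟩ := hc
  have hD0 : 0 ≤ D := le_trans (abs_nonneg _) (hD 0 ⟨le_rfl, zero_le_one⟩)
  rcases eq_or_lt_of_le hc0 with rfl | hcpos
  · have hsub : Set.Iio (0:ℝ) ⊆ (Set.Icc (0:ℝ) 1)ᶜ := by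
      intro x hx
      simp only [mem_compl_iff, mem_Icc, not_and_or, not_le]
      exact Or.inl hx
    rw [measure_mono_null hsub hμ, measure_mono_null hsub hν]
    simpa using hD0
  · set sn : ℕ → ℝ := fun n => c - c / (n + 1) with hsn
    have hsn_mem : ∀ n, sn n ∈ Set.Icc (0:ℝ) 1 := by
      intro n
      constructor
      · have h1 : c / (n + 1) ≤ c / 1 := by
          apply div_le_div_of_nonneg_left hcpos.le one_pos
          exact_mod_cast Nat.succ_le_succ (Nat.zero_le n)
        simp only [hsn, sub_nonneg]
        simpa using h1
      · have : 0 ≤ c / (n + 1) := div_nonneg hcpos.le (by positivity)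
        simp only [hsn]; linarith
    have hmono : Monotone fun n => Set.Iic (sn n) := by
      intro a b hab
      apply Iic_subset_Iic.mpr
      have : c / (b + 1) ≤ c / (a + 1) := by
        apply div_le_div_of_nonneg_left hcpos.le (by positivity)
        exact_mod_cast Nat.succ_le_succ hab
      simp only [hsn]; linarith
    have hunion : (⋃ n, Set.Iic (sn n)) = Set.Iio c := by
      ext x
      simp only [mem_iUnion, mem_Iic, mem_Iio]
      constructor
      · rintro ⟨n, hn⟩
        have : 0 < c / (n + 1) := div_pos hcpos (by positivity)
        have := hn.trans_lt (by simp only [hsn]; linarith : sn n < c)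
        exact this
      · intro hx
        obtain ⟨n, hn⟩ := exists_nat_ge (c / (c - x))
        refine ⟨n, ?_⟩
        have hcx : 0 < c - x := by linarith
        have : c / (n + 1) ≤ c - x := by
          rw [div_le_iff₀ (by positivity)]
          calc c = (c - x) * (c / (c - x)) := by field_simp
            _ ≤ (c - x) * (n + 1) := by
                apply mul_le_mul_of_nonneg_left _ hcx.le
                exact hn.trans (by linarith)
        simp only [hsn]; linarith
    have tμ : Filter.Tendsto (fun n => (μ (Set.Iic (sn n))).toReal) Filter.atTop
        (nhds ((μ (Set.Iio c)).toReal) ) := by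
      have := tendsto_measure_iUnion_atTop (μ := μ) hmono
      rw [hunion] at this
      exact (ENNReal.tendsto_toReal (measure_ne_top μ _)).comp this
    have tν : Filter.Tendsto (fun n => (ν (Set.Iic (sn n))).toReal) Filter.atTop
        (nhds ((ν (Set.Iio c)).toReal) ) := by
      have := tendsto_measure_iUnion_atTop (μ := ν) hmono
      rw [hunion] at this
      exact (ENNReal.tendsto_toReal (measure_ne_top ν _)).comp this
    refine le_of_tendsto ((tμ.sub tν).abs) (Filter.Eventually.of_forall fun n => ?_)
    exact hD (sn n) (hsn_mem n)


/-- Koksma–Hlawka for a monotone function constant outside `[0,1]`. -/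
lemma KH.mono_case (μ ν : Measure ℝ) [IsProbabilityMeasure μ] [IsProbabilityMeasure ν]
    (hμ : μ (Set.Icc (0:ℝ) 1)ᶜ = 0) (hν : ν (Set.Icc (0:ℝ) 1)ᶜ = 0)
    (g : ℝ → ℝ) (hg : Monotone g)
    (hg0 : ∀ x, x ≤ 0 → g x = g 0) (hg1 : ∀ x, 1 ≤ x → g x = g 1)
    (D : ℝ)
    (hD : ∀ c ∈ Set.Icc (0:ℝ) 1, |(μ (Set.Iic c)).toReal - (ν (Set.Iic c)).toReal| ≤ D) :
    |(∫ x, g x ∂μ) - ∫ x, g x ∂ν| ≤ (g 1 - g 0) * D := by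
  have hD0 : 0 ≤ D := le_trans (abs_nonneg _) (hD 0 ⟨le_rfl, zero_le_one⟩)
  set Δ : ℝ := g 1 - g 0 with hΔ
  have hΔ0 : 0 ≤ Δ := sub_nonneg.mpr (hg zero_le_one)
  set h : ℝ → ℝ := fun x => g x - g 0 with hh
  have hhm : Monotone h := fun a b hab => by simp only [hh]; linarith [hg hab]
  have hh_nn : ∀ x, 0 ≤ h x := by
    intro x
    rcases le_total x 0 with hx | hx
    · simp [hh, hg0 x hx]
    · simp only [hh, sub_nonneg]; exact hg hx
  have hh_le : ∀ x, h x ≤ Δ := by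
    intro x
    rcases le_total x 1 with hx | hx
    · simp only [hh, hΔ, sub_le_sub_iff_right]; exact hg hx
    · simp [hh, hΔ, hg1 x hx]
  have hmeas : Measurable h := hhm.measurable
  have hint : ∀ (ρ : Measure ℝ), IsProbabilityMeasure ρ → Integrable h ρ := by
    intro ρ hρ
    refine ⟨hmeas.aestronglyMeasurable, HasFiniteIntegral.of_bounded
      (C := Δ) (Filter.Eventually.of_forall fun x => ?_)⟩
    rw [Real.norm_eq_abs, abs_of_nonneg (hh_nn x)]
    exact hh_le x
  -- reduce to h
  have hgint : ∀ (ρ : Measure ℝ), IsProbabilityMeasure ρ → Integrable g ρ := by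
    intro ρ hρ
    have : g = fun x => h x + g 0 := by funext x; simp [hh]
    rw [this]
    exact (hint ρ hρ).add (integrable_const _)
  have hred : (∫ x, g x ∂μ) - ∫ x, g x ∂ν = (∫ x, h x ∂μ) - ∫ x, h x ∂ν := by
    have e1 : (∫ x, h x ∂μ) = (∫ x, g x ∂μ) - g 0 := by
      simp only [hh]
      rw [integral_sub (hgint μ inferInstance) (integrable_const _)]
      simp
    have e2 : (∫ x, h x ∂ν) = (∫ x, g x ∂ν) - g 0 := by
      simp only [hh]
      rw [integral_sub (hgint ν inferInstance) (integrable_const _)]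
      simp
    rw [e1, e2]; ring
  set A : ℝ → ℝ := fun t => (μ {a | t < h a}).toReal with hA
  set B : ℝ → ℝ := fun t => (ν {a | t < h a}).toReal with hB
  have keyμ : (∫ x, h x ∂μ) = ∫ t in Set.Ioi (0:ℝ), A t :=
    (hint μ inferInstance).integral_eq_integral_meas_lt (Filter.Eventually.of_forall hh_nn)
  have keyν : (∫ x, h x ∂ν) = ∫ t in Set.Ioi (0:ℝ), B t :=
    (hint ν inferInstance).integral_eq_integral_meas_lt (Filter.Eventually.of_forall hh_nn)
  -- measurability and integrability of A, B
  have measA : ∀ (ρ : Measure ℝ), Measurable (fun t => (ρ {a | t < h a}).toReal) :=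
    fun ρ => Measurable.ennreal_toReal
      (Antitone.measurable fun _ _ hst => measure_mono fun _ hq => lt_of_le_of_lt hst hq)
  have vanish : ∀ (ρ : Measure ℝ), ∀ t, Δ ≤ t → (ρ {a | t < h a}).toReal = 0 := by
    intro ρ t ht
    have : {a : ℝ | t < h a} = ∅ := by
      ext a; simp only [mem_setOf_eq, mem_empty_iff_false, iff_false, not_lt]
      exact (hh_le a).trans ht
    rw [this]; simp
  have le_one : ∀ (ρ : Measure ℝ) [IsProbabilityMeasure ρ], ∀ t,
      (ρ {a | t < h a}).toReal ≤ 1 := by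
    intro ρ hρ t
    rw [← ENNReal.toReal_one]
    exact ENNReal.toReal_mono ENNReal.one_ne_top prob_le_one
  have intA : ∀ (ρ : Measure ℝ), IsProbabilityMeasure ρ →
      IntegrableOn (fun t => (ρ {a | t < h a}).toReal) (Set.Ioi (0:ℝ)) := by
    intro ρ hρ
    refine Integrable.mono' (g := Set.indicator (Set.Ioc 0 Δ) fun _ => (1:ℝ)) ?_
      ((measA ρ).aestronglyMeasurable) ?_
    · rw [integrable_indicator_iff measurableSet_Ioc]
      exact integrableOn_const measure_Ioc_lt_top.ne
    · rw [ae_restrict_iff' measurableSet_Ioi]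
      refine Filter.Eventually.of_forall fun t ht => ?_
      rw [Real.norm_eq_abs, abs_of_nonneg ENNReal.toReal_nonneg]
      rcases le_or_gt t Δ with htΔ | htΔ
      · rw [Set.indicator_of_mem (Set.mem_Ioc.mpr ⟨ht, htΔ⟩)]
        exact le_one ρ t
      · rw [vanish ρ t htΔ.le, Set.indicator_of_notMem (fun hmem => absurd hmem.2 htΔ.not_ge)]
  -- pointwise core bound
  have hDio : ∀ c ∈ Set.Icc (0:ℝ) 1,
      |(μ (Set.Iio c)).toReal - (ν (Set.Iio c)).toReal| ≤ D :=
    fun c hc => KH.iio_bound μ ν hμ hν D hD hc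
  have hcore : ∀ t ∈ Set.Ioi (0:ℝ),
      |A t - B t| ≤ Set.indicator (Set.Ioc 0 Δ) (fun _ => D) t := by
    intro t ht
    have ht0 : (0:ℝ) < t := ht
    rcases lt_or_ge Δ t with htΔ | htΔ
    · rw [Set.indicator_of_notMem (fun hmem => absurd hmem.2 htΔ.not_ge)]
      simp only [hA, hB]
      rw [vanish μ t htΔ.le, vanish ν t htΔ.le]
      simp
    · rw [Set.indicator_of_mem (Set.mem_Ioc.mpr ⟨ht, htΔ⟩)]
      rcases eq_empty_or_nonempty {a : ℝ | t < h a} with hUe | ⟨x, hx⟩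
      · simp only [hA, hB, hUe, measure_empty, ENNReal.toReal_zero, sub_self, abs_zero]
        exact hD0
      · have hupper : ∀ a ∈ {a : ℝ | t < h a}, ∀ b, a ≤ b → b ∈ {a : ℝ | t < h a} :=
          fun a ha b hab => lt_of_lt_of_le ha (hhm hab)
        have hU1 : (1:ℝ) ∈ {a : ℝ | t < h a} := by
          rcases le_total x 1 with hx1 | hx1
          · exact hupper x hx 1 hx1
          · have hxx : h x = h 1 := by simp only [hh]; rw [hg1 x hx1]
            simpa [Set.mem_setOf_eq, ← hxx] using hx
        have hUsub : {a : ℝ | t < h a} ⊆ Set.Ioi (0:ℝ) := by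
          intro a ha
          simp only [Set.mem_setOf_eq] at ha
          by_contra hcon
          have ha0 : a ≤ 0 := not_lt.mp hcon
          have : h a = 0 := by simp [hh, hg0 a ha0]
          rw [this] at ha
          linarith
        have hbdd : BddBelow {a : ℝ | t < h a} := ⟨0, fun a ha => (hUsub ha).le⟩
        set c := sInf {a : ℝ | t < h a} with hc
        have hc0 : 0 ≤ c := le_csInf ⟨x, hx⟩ (fun b hb => (hUsub hb).le)
        have hc1 : c ≤ 1 := csInf_le hbdd hU1
        have hIoi : Set.Ioi c ⊆ {a : ℝ | t < h a} := by
          intro y hy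
          obtain ⟨u, hu, huy⟩ := exists_lt_of_csInf_lt ⟨x, hx⟩ hy
          exact hupper u hu y huy.le
        have hIci : {a : ℝ | t < h a} ⊆ Set.Ici c := fun u hu => csInf_le hbdd hu
        by_cases hcU : c ∈ {a : ℝ | t < h a}
        · have hUeq : {a : ℝ | t < h a} = Set.Ici c :=
            subset_antisymm hIci (fun y hy => hupper c hcU y hy)
          have e : ∀ (ρ : Measure ℝ), IsProbabilityMeasure ρ →
              (ρ {a : ℝ | t < h a}).toReal = 1 - (ρ (Set.Iio c)).toReal := by
            intro ρ hρ
            rw [hUeq, ← Set.compl_Iio, prob_compl_eq_one_sub measurableSet_Iio,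
              ENNReal.toReal_sub_of_le prob_le_one ENNReal.one_ne_top, ENNReal.toReal_one]
          simp only [hA, hB]
          rw [e μ inferInstance, e ν inferInstance,
            show (1 - (μ (Set.Iio c)).toReal) - (1 - (ν (Set.Iio c)).toReal)
              = -((μ (Set.Iio c)).toReal - (ν (Set.Iio c)).toReal) by ring, abs_neg]
          exact hDio c ⟨hc0, hc1⟩
        · have hUeq : {a : ℝ | t < h a} = Set.Ioi c :=
            subset_antisymm
              (fun y (hy : y ∈ {a : ℝ | t < h a}) => lt_of_le_of_ne (hIci hy : c ≤ y) (fun (hyc : c = y) => hcU (hyc ▸ hy)))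
              hIoi
          have e : ∀ (ρ : Measure ℝ), IsProbabilityMeasure ρ →
              (ρ {a : ℝ | t < h a}).toReal = 1 - (ρ (Set.Iic c)).toReal := by
            intro ρ hρ
            rw [hUeq, ← Set.compl_Iic, prob_compl_eq_one_sub measurableSet_Iic,
              ENNReal.toReal_sub_of_le prob_le_one ENNReal.one_ne_top, ENNReal.toReal_one]
          simp only [hA, hB]
          rw [e μ inferInstance, e ν inferInstance,
            show (1 - (μ (Set.Iic c)).toReal) - (1 - (ν (Set.Iic c)).toReal)
              = -((μ (Set.Iic c)).toReal - (ν (Set.Iic c)).toReal) by ring, abs_neg]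
          exact hD c ⟨hc0, hc1⟩
  -- final chain
  rw [hred, keyμ, keyν, ← integral_sub (intA μ inferInstance) (intA ν inferInstance)]
  have step1 : |∫ t in Set.Ioi (0:ℝ), (A t - B t)| ≤ ∫ t in Set.Ioi (0:ℝ), |A t - B t| := by
    simpa [Real.norm_eq_abs] using
      norm_integral_le_integral_norm (μ := volume.restrict (Set.Ioi (0:ℝ))) (fun t => A t - B t)
  have int_ind : IntegrableOn (Set.indicator (Set.Ioc 0 Δ) fun _ => D) (Set.Ioi (0:ℝ)) := by
    exact (integrable_indicator_iff measurableSet_Ioc).mpr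
      (integrableOn_const measure_Ioc_lt_top.ne)
  have step2 : (∫ t in Set.Ioi (0:ℝ), |A t - B t|)
      ≤ ∫ t in Set.Ioi (0:ℝ), Set.indicator (Set.Ioc 0 Δ) (fun _ => D) t :=
    setIntegral_mono_on ((intA μ inferInstance).sub (intA ν inferInstance)).abs
      int_ind measurableSet_Ioi hcore
  have step3 : (∫ t in Set.Ioi (0:ℝ), Set.indicator (Set.Ioc 0 Δ) (fun _ => D) t) = Δ * D := by
    rw [integral_indicator measurableSet_Ioc, Measure.restrict_restrict measurableSet_Ioc,
      Set.inter_eq_self_of_subset_left Set.Ioc_subset_Ioi_self,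
      setIntegral_const, Real.volume_real_Ioc_of_le hΔ0, sub_zero, smul_eq_mul]
  calc |∫ t in Set.Ioi (0:ℝ), (A t - B t)| ≤ _ := step1
    _ ≤ _ := step2
    _ = Δ * D := step3

/-- One-dimensional Koksma–Hlawka inequality: for a probability measure `μ` supported in
`[0,1]`, a function `f` of bounded total variation `V` on `[0,1]`, and points
`z₁, …, z_m ∈ [0,1]`, the gap between `∫ f dμ` and the empirical average `(1/m) ∑ f(zᵢ)`
is at most `V · D*`, where `D*` is the star discrepancy (Kolmogorov–Smirnov distance)
between `μ` and the empirical measure of the points. -/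
theorem abs_integral_sub_average_le_variation_mul_discrepancy
    (μ : Measure ℝ) [IsProbabilityMeasure μ] (hsupp : μ (Set.Icc (0:ℝ) 1)ᶜ = 0)
    (f : ℝ → ℝ) (hV : eVariationOn f (Set.Icc (0:ℝ) 1) ≠ ⊤)
    {m : ℕ} (hm : 1 ≤ m) (z : Fin m → ℝ) (hz : ∀ i, z i ∈ Set.Icc (0:ℝ) 1)
    (hf_int : Integrable f μ) :
    |(∫ s, f s ∂μ) - (∑ i : Fin m, f (z i)) / m| ≤
      (eVariationOn f (Set.Icc (0:ℝ) 1)).toReal *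
        ⨆ t ∈ Set.Icc (0:ℝ) 1,
          |(μ (Set.Iic t)).toReal -
            ((Finset.univ.filter (fun i : Fin m => z i ≤ t)).card : ℝ) / m| := by
  classical
  have h0I : (0:ℝ) ∈ Set.Icc (0:ℝ) 1 := ⟨le_rfl, zero_le_one⟩
  have h1I : (1:ℝ) ∈ Set.Icc (0:ℝ) 1 := ⟨zero_le_one, le_rfl⟩
  have hmR : (0:ℝ) < m := by exact_mod_cast hm
  have hBV : LocallyBoundedVariationOn f (Set.Icc (0:ℝ) 1) := fun a b _ _ =>
    ne_top_of_le_ne_top hV (eVariationOn.mono f Set.inter_subset_left)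
  -- clamp to [0,1]
  set cl : ℝ → ℝ := fun x => max 0 (min 1 x) with hcl
  have hclmono : Monotone cl := fun a b hab => max_le_max le_rfl (min_le_min le_rfl hab)
  have hclmem : ∀ x, cl x ∈ Set.Icc (0:ℝ) 1 :=
    fun x => ⟨le_max_left _ _, max_le zero_le_one (min_le_left _ _)⟩
  have hclid : ∀ x ∈ Set.Icc (0:ℝ) 1, cl x = x := fun x hx => by
    simp only [hcl]; rw [min_eq_right hx.2, max_eq_right hx.1]
  have hcl0 : ∀ x, x ≤ 0 → cl x = 0 := fun x hx => by
    simp only [hcl]; rw [max_eq_left ((min_le_right 1 x).trans hx)]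
  have hcl1 : ∀ x, 1 ≤ x → cl x = 1 := fun x hx => by
    simp only [hcl]; rw [min_eq_left hx, max_eq_right zero_le_one]
  have hcl0' : cl 0 = 0 := hcl0 0 le_rfl
  have hcl1' : cl 1 = 1 := hcl1 1 le_rfl
  -- variation function and monotone parts
  set v : ℝ → ℝ := fun x => variationOnFromTo f (Set.Icc (0:ℝ) 1) 0 x with hv
  have hsubm : MonotoneOn (fun x => v x - f x) (Set.Icc (0:ℝ) 1) := by
    have H := variationOnFromTo.sub_self_monotoneOn hBV h0I
    intro a ha b hb hab
    exact H ha hb hab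
  have haddm : MonotoneOn (fun x => v x + f x) (Set.Icc (0:ℝ) 1) := by
    intro b hb c hc bc
    have key : f b - f c ≤ variationOnFromTo f (Set.Icc (0:ℝ) 1) b c := by
      calc f b - f c ≤ |f b - f c| := le_abs_self _
        _ = dist (f b) (f c) := (Real.dist_eq _ _).symm
        _ ≤ variationOnFromTo f (Set.Icc (0:ℝ) 1) b c := by
            rw [variationOnFromTo.eq_of_le f _ bc, dist_edist]
            apply ENNReal.toReal_mono (hBV b c hb hc)
            apply eVariationOn.edist_le f
            exacts [⟨hb, le_rfl, bc⟩, ⟨hc, bc, le_rfl⟩]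
    have hvadd := variationOnFromTo.add hBV h0I hb hc
    have hvc : v c - v b = variationOnFromTo f (Set.Icc (0:ℝ) 1) b c := by
      simp only [hv]; linarith [hvadd]
    dsimp only
    linarith [key, hvc]
  set p : ℝ → ℝ := fun x => (v (cl x) + f (cl x)) / 2 with hp
  set q : ℝ → ℝ := fun x => (v (cl x) - f (cl x)) / 2 with hq
  have hpm : Monotone p := by
    intro a b hab
    have := haddm (hclmem a) (hclmem b) (hclmono hab)
    simp only [hp]; dsimp only at this ⊢; linarith
  have hqm : Monotone q := by
    intro a b hab
    have := hsubm (hclmem a) (hclmem b) (hclmono hab)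
    simp only [hq]; dsimp only at this ⊢; linarith
  have hp0 : ∀ x, x ≤ 0 → p x = p 0 := fun x hx => by
    simp only [hp]; rw [hcl0 x hx, hcl0']
  have hp1 : ∀ x, 1 ≤ x → p x = p 1 := fun x hx => by
    simp only [hp]; rw [hcl1 x hx, hcl1']
  have hq0 : ∀ x, x ≤ 0 → q x = q 0 := fun x hx => by
    simp only [hq]; rw [hcl0 x hx, hcl0']
  have hq1 : ∀ x, 1 ≤ x → q x = q 1 := fun x hx => by
    simp only [hq]; rw [hcl1 x hx, hcl1']
  have hv0 : v 0 = 0 := variationOnFromTo.self f _ 0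
  have hv1 : v 1 = (eVariationOn f (Set.Icc (0:ℝ) 1)).toReal := by
    simp only [hv]
    rw [variationOnFromTo.eq_of_le f _ zero_le_one, Set.inter_self]
  -- the empirical measure
  set ρ : Measure ℝ := (∑ i : Fin m, Measure.dirac (z i) : Measure ℝ) with hρ
  set ν : Measure ℝ := ((m : ℝ≥0∞))⁻¹ • ρ with hν
  have hm0 : (m : ℝ≥0∞) ≠ 0 := Nat.cast_ne_zero.mpr (by omega)
  have hρuniv : ρ Set.univ = m := by
    simp only [hρ, Measure.finset_sum_apply, measure_univ]
    simp
  haveI hνprob : IsProbabilityMeasure ν := by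
    constructor
    rw [hν, Measure.smul_apply, hρuniv, smul_eq_mul, ENNReal.inv_mul_cancel hm0 (ENNReal.natCast_ne_top m)]
  have hρsupp : ρ (Set.Icc (0:ℝ) 1)ᶜ = 0 := by
    simp only [hρ, Measure.finset_sum_apply]
    refine Finset.sum_eq_zero fun i _ => ?_
    rw [Measure.dirac_apply' _ measurableSet_Icc.compl]
    simp [hz i]
  have hνsupp : ν (Set.Icc (0:ℝ) 1)ᶜ = 0 := by
    rw [hν, Measure.smul_apply, hρsupp, smul_eq_mul, mul_zero]
  -- the CDF of ν
  have hνIic : ∀ c : ℝ, (ν (Set.Iic c)).toReal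
      = ((Finset.univ.filter (fun i : Fin m => z i ≤ c)).card : ℝ) / m := by
    intro c
    have hsum : ρ (Set.Iic c) = ((Finset.univ.filter (fun i : Fin m => z i ≤ c)).card : ℝ≥0∞) := by
      simp only [hρ, Measure.finset_sum_apply]
      have : ∀ i : Fin m, Measure.dirac (z i) (Set.Iic c)
          = if z i ≤ c then (1:ℝ≥0∞) else 0 := fun i => by
        rw [Measure.dirac_apply' _ measurableSet_Iic]
        simp [Set.indicator_apply, Set.mem_Iic]
      rw [Finset.sum_congr rfl fun i _ => this i, Finset.sum_boole]
    rw [hν, Measure.smul_apply, hsum, smul_eq_mul, ENNReal.toReal_mul, ENNReal.toReal_inv]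
    simp [div_eq_inv_mul]
  -- the discrepancy
  set D : ℝ := ⨆ t ∈ Set.Icc (0:ℝ) 1,
      |(μ (Set.Iic t)).toReal -
        ((Finset.univ.filter (fun i : Fin m => z i ≤ t)).card : ℝ) / m| with hDdef
  have hEbound : ∀ t, |(μ (Set.Iic t)).toReal -
      ((Finset.univ.filter (fun i : Fin m => z i ≤ t)).card : ℝ) / m| ≤ 2 := by
    intro t
    have h1 : (μ (Set.Iic t)).toReal ≤ 1 := by
      rw [← ENNReal.toReal_one]
      exact ENNReal.toReal_mono ENNReal.one_ne_top prob_le_one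
    have h2 : ((Finset.univ.filter (fun i : Fin m => z i ≤ t)).card : ℝ) / m ≤ 1 := by
      rw [div_le_one hmR]
      exact_mod_cast (Finset.card_filter_le _ _).trans (by simp)
    have h3 : (0:ℝ) ≤ ((Finset.univ.filter (fun i : Fin m => z i ≤ t)).card : ℝ) / m :=
      div_nonneg (by positivity) hmR.le
    have h4 : (0:ℝ) ≤ (μ (Set.Iic t)).toReal := ENNReal.toReal_nonneg
    rw [abs_le]; constructor <;> linarith
  have hranged : BddAbove (Set.range fun t => ⨆ (_ : t ∈ Set.Icc (0:ℝ) 1),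
      |(μ (Set.Iic t)).toReal -
        ((Finset.univ.filter (fun i : Fin m => z i ≤ t)).card : ℝ) / m|) := by
    refine ⟨2, ?_⟩
    rintro y ⟨t, rfl⟩
    by_cases ht : t ∈ Set.Icc (0:ℝ) 1
    · dsimp only; rw [ciSup_pos ht]; exact hEbound t
    · dsimp only
      haveI : IsEmpty (t ∈ Set.Icc (0:ℝ) 1) := ⟨ht⟩
      rw [iSup_of_empty', Real.sSup_empty]; norm_num
  have hDbound : ∀ c ∈ Set.Icc (0:ℝ) 1,
      |(μ (Set.Iic c)).toReal - (ν (Set.Iic c)).toReal| ≤ D := by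
    intro c hc
    rw [hνIic c]
    calc |(μ (Set.Iic c)).toReal -
        ((Finset.univ.filter (fun i : Fin m => z i ≤ c)).card : ℝ) / m|
        = ⨆ (_ : c ∈ Set.Icc (0:ℝ) 1), |(μ (Set.Iic c)).toReal -
            ((Finset.univ.filter (fun i : Fin m => z i ≤ c)).card : ℝ) / m| :=
          by rw [ciSup_pos hc]
      _ ≤ D := le_ciSup hranged c
  -- a.e. equality f = p - q
  have hfeq : ∀ x ∈ Set.Icc (0:ℝ) 1, f x = p x - q x := fun x hx => by
    simp only [hp, hq]; rw [hclid x hx]; ring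
  have haeμ : f =ᵐ[μ] fun x => p x - q x := by
    refine measure_mono_null (fun x hx hxin => hx (hfeq x hxin)) hsupp
  have haeν : f =ᵐ[ν] fun x => p x - q x := by
    refine measure_mono_null (fun x hx hxin => hx (hfeq x hxin)) hνsupp
  -- integrability of p and q
  have hpbd : ∀ x, p 0 ≤ p x ∧ p x ≤ p 1 := by
    intro x
    simp only [hp]; rw [hcl0', hcl1']
    constructor
    · have := haddm h0I (hclmem x) (hclmem x).1; dsimp only at this; linarith
    · have := haddm (hclmem x) h1I (hclmem x).2; dsimp only at this; linarith
  have hqbd : ∀ x, q 0 ≤ q x ∧ q x ≤ q 1 := by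
    intro x
    simp only [hq]; rw [hcl0', hcl1']
    constructor
    · have := hsubm h0I (hclmem x) (hclmem x).1; dsimp only at this; linarith
    · have := hsubm (hclmem x) h1I (hclmem x).2; dsimp only at this; linarith
  have hintp : ∀ (σ : Measure ℝ), IsProbabilityMeasure σ → Integrable p σ := by
    intro σ hσ
    refine ⟨hpm.measurable.aestronglyMeasurable, HasFiniteIntegral.of_bounded
      (C := |p 0| + |p 1|) (Filter.Eventually.of_forall fun x => ?_)⟩
    rw [Real.norm_eq_abs, abs_le]
    have := hpbd x
    have h0 := abs_nonneg (p 0); have h1 := neg_abs_le (p 0); have h2 := le_abs_self (p 1)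
    constructor <;> linarith [abs_nonneg (p 1)]
  have hintq : ∀ (σ : Measure ℝ), IsProbabilityMeasure σ → Integrable q σ := by
    intro σ hσ
    refine ⟨hqm.measurable.aestronglyMeasurable, HasFiniteIntegral.of_bounded
      (C := |q 0| + |q 1|) (Filter.Eventually.of_forall fun x => ?_)⟩
    rw [Real.norm_eq_abs, abs_le]
    have := hqbd x
    have h0 := abs_nonneg (q 0); have h1 := neg_abs_le (q 0); have h2 := le_abs_self (q 1)
    constructor <;> linarith [abs_nonneg (q 1)]
  -- rewrite the empirical sum as an integral against ν
  have hsumint : (∑ i : Fin m, f (z i)) / (m:ℝ) = ∫ x, f x ∂ν := by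
    rw [hν, integral_smul_measure, hρ,
      integral_finset_sum_measure (fun i _ => KH.integrable_dirac f (z i))]
    simp only [integral_dirac, ENNReal.toReal_inv, smul_eq_mul]
    simp [div_eq_inv_mul]
  -- split integrals
  have hμint : ∫ x, f x ∂μ = (∫ x, p x ∂μ) - ∫ x, q x ∂μ := by
    rw [integral_congr_ae haeμ, integral_sub (hintp μ inferInstance) (hintq μ inferInstance)]
  have hνint : ∫ x, f x ∂ν = (∫ x, p x ∂ν) - ∫ x, q x ∂ν := by
    rw [integral_congr_ae haeν, integral_sub (hintp ν hνprob) (hintq ν hνprob)]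
  have hP := KH.mono_case μ ν hsupp hνsupp p hpm hp0 hp1 D hDbound
  have hQ := KH.mono_case μ ν hsupp hνsupp q hqm hq0 hq1 D hDbound
  have hpq : (p 1 - p 0) + (q 1 - q 0) = (eVariationOn f (Set.Icc (0:ℝ) 1)).toReal := by
    simp only [hp, hq]; rw [hcl0', hcl1', hv0, hv1]; ring
  rw [hsumint, hμint, hνint]
  calc |((∫ x, p x ∂μ) - ∫ x, q x ∂μ) - ((∫ x, p x ∂ν) - ∫ x, q x ∂ν)|
      = |((∫ x, p x ∂μ) - ∫ x, p x ∂ν) - ((∫ x, q x ∂μ) - ∫ x, q x ∂ν)| := by congr 1; ring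
    _ ≤ |(∫ x, p x ∂μ) - ∫ x, p x ∂ν| + |(∫ x, q x ∂μ) - ∫ x, q x ∂ν| := abs_sub _ _
    _ ≤ (p 1 - p 0) * D + (q 1 - q 0) * D := add_le_add hP hQ
    _ = (eVariationOn f (Set.Icc (0:ℝ) 1)).toReal * D := by rw [← add_mul, hpq]
end
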